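/- Let N, n be positive integers and, for each i = 1,…,N, let m_i be a positive integer, D_i an m_i × n real matrix, and d_i ∈ ℝ^{m_i}, with each polyhedron A_i = {α ∈ ℝ^n : D_i α ≤ d_i} nonempty. Let x_1,…,x_N ∈ ℝ^n and b ∈ ℝ. Then the robust constraint Σ_{i=1}^N ⟨α_i, x_i⟩ ≤ b holds for every choice α_i ∈ A_i (i = 1,…,N) if and only if there exist vectors y_1,…,y_N with y_i ∈ ℝ^{m_i}, y_i ≥ 0 componentwise, D_iᵀ y_i = x_i for every i, and Σ_{i=1}^N ⟨y_i, d_i⟩ ≤ b. -/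

import Mathlib

open Finset

lemma cone_carath {E : Type*} [AddCommGroup E] [Module ℝ E]
    {ι : Type*} [Fintype ι] [DecidableEq ι] (v : ι → E) :
    ∀ (y : ι → ℝ), (∀ k, 0 ≤ y k) →
      ∃ z : ι → ℝ, (∀ k, 0 ≤ z k) ∧ (∑ k, z k • v k = ∑ k, y k • v k) ∧
        LinearIndependent ℝ (fun k : {k // z k ≠ 0} => v (k : ι)) := by
  suffices H : ∀ (c : ℕ) (y : ι → ℝ), ({k | y k ≠ 0} : Finset ι).card ≤ c → (∀ k, 0 ≤ y k) →
      ∃ z : ι → ℝ, (∀ k, 0 ≤ z k) ∧ (∑ k, z k • v k = ∑ k, y k • v k) ∧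
        LinearIndependent ℝ (fun k : {k // z k ≠ 0} => v (k : ι)) by
    intro y hy
    exact H _ y le_rfl hy
  intro c
  induction c with
  | zero =>
    intro y hcard hy
    have hy0 : ∀ k, y k = 0 := by
      intro k
      by_contra hk
      have : k ∈ ({k | y k ≠ 0} : Finset ι) := by simpa using hk
      have := Finset.card_pos.mpr ⟨k, this⟩
      omega
    refine ⟨y, hy, rfl, ?_⟩
    have : IsEmpty {k // y k ≠ 0} := ⟨fun k => k.2 (hy0 k)⟩
    exact linearIndependent_empty_type
  | succ c ih =>
    intro y hcard hy
    by_cases hind : LinearIndependent ℝ (fun k : {k // y k ≠ 0} => v (k : ι))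
    · exact ⟨y, hy, rfl, hind⟩
    · -- get a dependence relation supported on the support of y
      obtain ⟨g, hg0, k₀, hk₀⟩ := Fintype.not_linearIndependent_iff.mp hind
      set ch : ι → ℝ := fun k => if h : y k ≠ 0 then g ⟨k, h⟩ else 0 with hch
      have hchsum : ∑ k, ch k • v k = 0 := by
        have h1 : ∑ k, ch k • v k = ∑ k ∈ ({k | y k ≠ 0} : Finset ι), ch k • v k :=
          (Finset.sum_subset (Finset.subset_univ _) (by
            intro k _ hk
            simp only [Finset.mem_filter, Finset.mem_univ, true_and, not_not] at hk
            simp [hch, hk])).symm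
        rw [h1, Finset.sum_subtype (p := fun k => y k ≠ 0) _ (by simp) (fun k => ch k • v k)]
        rw [← hg0]
        apply Finset.sum_congr rfl
        intro k _
        simp [hch, k.2]
      have hchsupp : ∀ k, y k = 0 → ch k = 0 := by
        intro k hk; simp [hch, hk]
      have hchne : ch (k₀ : ι) ≠ 0 := by
        simpa [hch, k₀.2] using hk₀
      -- WLOG there is a positive entry
      obtain ⟨c', hc'sum, hc'supp, k₁, hk₁⟩ :
          ∃ c' : ι → ℝ, (∑ k, c' k • v k = 0) ∧ (∀ k, y k = 0 → c' k = 0) ∧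
            ∃ k₁, 0 < c' k₁ := by
        by_cases hpos : ∃ k, 0 < ch k
        · obtain ⟨k₁, hk₁⟩ := hpos
          exact ⟨ch, hchsum, hchsupp, k₁, hk₁⟩
        · push_neg at hpos
          refine ⟨-ch, by simpa [neg_smul] using congrArg Neg.neg hchsum,
            fun k hk => by simp [hchsupp k hk], k₀, ?_⟩
          have := hpos (k₀ : ι)
          simp only [Pi.neg_apply]
          cases lt_or_eq_of_le this with
          | inl h => linarith
          | inr h => exact absurd h hchne
      -- the set of positive entries
      set T : Finset ι := {k | 0 < c' k} with hT
      have hTne : T.Nonempty := ⟨k₁, by simp [hT, hk₁]⟩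
      have hmemT : ∀ k ∈ T, 0 < c' k := by intro k hk; simpa [hT] using hk
      set lam : ℝ := T.inf' hTne (fun k => y k / c' k) with hlam
      obtain ⟨k₂, hk₂T, hk₂⟩ := T.exists_mem_eq_inf' hTne (fun k => y k / c' k)
      have hlam0 : 0 ≤ lam := by
        rw [hlam]
        apply Finset.le_inf'
        intro k hk
        exact div_nonneg (hy k) (hmemT k hk).le
      set z : ι → ℝ := fun k => y k - lam * c' k with hz
      have hz0 : ∀ k, 0 ≤ z k := by
        intro k
        by_cases hk : 0 < c' k
        · have hkT : k ∈ T := by simp [hT, hk]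
          have : lam ≤ y k / c' k := Finset.inf'_le _ hkT
          have := (le_div_iff₀ hk).mp this
          simp only [hz]; linarith
        · push_neg at hk
          have : lam * c' k ≤ 0 := mul_nonpos_of_nonneg_of_nonpos hlam0 hk
          have := hy k
          simp only [hz]; linarith
      have hzk₂ : z k₂ = 0 := by
        have hc : c' k₂ ≠ 0 := (hmemT k₂ hk₂T).ne'
        have hle : lam = y k₂ / c' k₂ := hk₂
        show y k₂ - lam * c' k₂ = 0
        rw [hle]
        field_simp
        ring
      have hyk₂ : y k₂ ≠ 0 := by
        intro h
        exact (hmemT k₂ hk₂T).ne' (hc'supp k₂ h)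
      have hsum : ∑ k, z k • v k = ∑ k, y k • v k := by
        simp only [hz, sub_smul, Finset.sum_sub_distrib, mul_smul]
        rw [← Finset.smul_sum, hc'sum, smul_zero, sub_zero]
      have hcard' : ({k | z k ≠ 0} : Finset ι).card ≤ c := by
        have hsub : ({k | z k ≠ 0} : Finset ι) ⊆ ({k | y k ≠ 0} : Finset ι).erase k₂ := by
          intro k hk
          simp only [Finset.mem_filter, Finset.mem_univ, true_and] at hk
          rw [Finset.mem_erase]
          constructor
          · intro h; subst h; exact hk hzk₂
          · simp only [Finset.mem_filter, Finset.mem_univ, true_and]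
            intro h
            apply hk
            show y k - lam * c' k = 0
            simp [h, hc'supp k h]
        have h2 := Finset.card_le_card hsub
        have h3 : k₂ ∈ ({k | y k ≠ 0} : Finset ι) := by simp [hyk₂]
        have h4 := Finset.card_erase_of_mem h3
        omega
      obtain ⟨z', h1, h2, h3⟩ := ih z hcard' hz0
      exact ⟨z', h1, h2.trans hsum, h3⟩


open Finset

lemma cone_closed_of_li {E : Type*} [NormedAddCommGroup E] [NormedSpace ℝ E]
    {σ : Type*} [Fintype σ] (w : σ → E) (hw : LinearIndependent ℝ w) :
    IsClosed {x : E | ∃ y : σ → ℝ, (∀ k, 0 ≤ y k) ∧ ∑ k, y k • w k = x} := by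
  let L : (σ → ℝ) →ₗ[ℝ] E :=
    { toFun := fun y => ∑ k, y k • w k
      map_add' := by intro a b; simp [add_smul, Finset.sum_add_distrib]
      map_smul' := by intro r a; simp [smul_smul, Finset.smul_sum] }
  have hker : LinearMap.ker L = ⊥ := by
    rw [LinearMap.ker_eq_bot']
    intro a ha
    have := Fintype.linearIndependent_iff.mp hw a ha
    funext k; exact this k
  have hCE := LinearMap.isClosedEmbedding_of_injective hker
  have hset : {x : E | ∃ y : σ → ℝ, (∀ k, 0 ≤ y k) ∧ ∑ k, y k • w k = x} =
      L '' {y | ∀ k, 0 ≤ y k} := by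
    ext x
    constructor
    · rintro ⟨y, hy, rfl⟩; exact ⟨y, hy, rfl⟩
    · rintro ⟨y, hy, rfl⟩; exact ⟨y, hy, rfl⟩
  rw [hset]
  apply hCE.isClosedMap
  have : {y : σ → ℝ | ∀ k, 0 ≤ y k} = ⋂ k, {y | 0 ≤ y k} := by
    ext y; simp
  rw [this]
  exact isClosed_iInter fun k => isClosed_le continuous_const (continuous_apply k)

lemma cone_closed {E : Type*} [NormedAddCommGroup E] [NormedSpace ℝ E]
    {ι : Type*} [Fintype ι] [DecidableEq ι] (v : ι → E) :
    IsClosed {x : E | ∃ y : ι → ℝ, (∀ k, 0 ≤ y k) ∧ ∑ k, y k • v k = x} := by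
  have key : {x : E | ∃ y : ι → ℝ, (∀ k, 0 ≤ y k) ∧ ∑ k, y k • v k = x} =
      ⋃ t : {t : Finset ι // LinearIndependent ℝ (fun k : {k // k ∈ t} => v (k : ι))},
        {x : E | ∃ y : {k // k ∈ (t : Finset ι)} → ℝ, (∀ k, 0 ≤ y k) ∧ ∑ k, y k • v (k : ι) = x} := by
    ext x
    simp only [Set.mem_setOf_eq, Set.mem_iUnion]
    constructor
    · rintro ⟨y, hy, rfl⟩
      obtain ⟨z, hz, hsum, hli⟩ := cone_carath v y hy
      set t : Finset ι := {k | z k ≠ 0} with ht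
      have hli' : LinearIndependent ℝ (fun k : {k // k ∈ t} => v (k : ι)) := by
        have h2 := hli.comp
          (Equiv.subtypeEquivRight (p := fun k => k ∈ t) (q := fun k => z k ≠ 0)
            (by intro k; simp [ht]))
          (Equiv.injective _)
        convert h2 using 1
        rfl
      refine ⟨⟨t, hli'⟩, fun k => z k, fun k => hz _, ?_⟩
      rw [← hsum]
      have : ∑ k, z k • v k = ∑ k ∈ t, z k • v k := by
        refine (Finset.sum_subset (Finset.subset_univ _) ?_).symm
        intro k _ hk
        simp only [ht, Finset.mem_filter, Finset.mem_univ, true_and, not_not] at hk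
        simp [hk]
      rw [this]
      show ∑ k : {k // k ∈ t}, z (k : ι) • v (k : ι) = ∑ k ∈ t, z k • v k
      exact Finset.sum_coe_sort t (fun k => z k • v k)
    · rintro ⟨⟨t, hli⟩, y, hy, rfl⟩
      refine ⟨fun k => if h : k ∈ t then y ⟨k, h⟩ else 0, ?_, ?_⟩
      · intro k; by_cases h : k ∈ t <;> simp [h, hy]
      have : ∑ k, (if h : k ∈ t then y ⟨k, h⟩ else 0) • v k
          = ∑ k ∈ t, (if h : k ∈ t then y ⟨k, h⟩ else 0) • v k := by
        refine (Finset.sum_subset (Finset.subset_univ _) ?_).symm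
        intro k _ hk
        simp [hk]
      rw [this, ← Finset.sum_coe_sort t (fun k => (if h : k ∈ t then y ⟨k, h⟩ else 0) • v k)]
      apply Finset.sum_congr rfl
      intro k _
      simp [k.2]
  rw [key]
  apply isClosed_iUnion_of_finite
  rintro ⟨t, hli⟩
  exact cone_closed_of_li _ hli

open Finset RealInnerProductSpace

lemma farkas_cone {E : Type*} [NormedAddCommGroup E] [InnerProductSpace ℝ E]
    [FiniteDimensional ℝ E] {ι : Type*} [Fintype ι] [DecidableEq ι]
    (v : ι → E) (u : E)
    (h : ∀ z : E, (∀ k, 0 ≤ ⟪v k, z⟫) → 0 ≤ ⟪u, z⟫) :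
    ∃ y : ι → ℝ, (∀ k, 0 ≤ y k) ∧ ∑ k, y k • v k = u := by
  by_contra hu
  set S : Set E := {x : E | ∃ y : ι → ℝ, (∀ k, 0 ≤ y k) ∧ ∑ k, y k • v k = x} with hS
  have hSco : Convex ℝ S := by
    rintro p ⟨yp, hyp, rfl⟩ q ⟨yq, hyq, rfl⟩ a c ha hc _
    refine ⟨fun k => a * yp k + c * yq k,
      fun k => add_nonneg (mul_nonneg ha (hyp k)) (mul_nonneg hc (hyq k)), ?_⟩
    simp [add_smul, Finset.sum_add_distrib, mul_smul, ← Finset.smul_sum]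
  let K : ConvexCone ℝ E :=
    { carrier := S
      smul_mem' := by
        rintro c hc p ⟨y, hy, rfl⟩
        refine ⟨fun k => c * y k, fun k => mul_nonneg hc.le (hy k), ?_⟩
        simp [mul_smul, ← Finset.smul_sum]
      add_mem' := by
        rintro p ⟨yp, hyp, rfl⟩ q ⟨yq, hyq, rfl⟩
        refine ⟨fun k => yp k + yq k, fun k => add_nonneg (hyp k) (hyq k), ?_⟩
        simp [add_smul, Finset.sum_add_distrib] }
  have hne : (K : Set E).Nonempty := ⟨0, fun k => 0, fun k => le_refl 0, by simp⟩
  have hcl : IsClosed (K : Set E) := cone_closed v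
  have hmem : ∀ k, v k ∈ K := by
    intro k
    refine ⟨fun k' => if k' = k then 1 else 0, fun k' => by dsimp only; split <;> norm_num, ?_⟩
    simp [ite_smul]
  obtain ⟨z, h1, h2⟩ :=
    (show ProperCone ℝ E from ⟨K.toPointedCone ⟨fun _ => 0, fun _ => le_refl 0, by simp⟩,
      hcl⟩).hyperplane_separation' (x₀ := u) hu
  rw [real_inner_comm] at h2
  have h3 : ∀ k, 0 ≤ ⟪v k, z⟫ := fun k => h1 _ (hmem k)
  have h4 := h z h3
  rw [real_inner_comm] at h4
  linarith

lemma farkas_affine {m n : ℕ} (D : Fin m → Fin n → ℝ) (d : Fin m → ℝ)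
    (hfeas : ∃ a : Fin n → ℝ, ∀ k, ∑ j, D k j * a j ≤ d k)
    (x : Fin n → ℝ) (c : ℝ)
    (hub : ∀ a : Fin n → ℝ, (∀ k, ∑ j, D k j * a j ≤ d k) → ∑ j, a j * x j ≤ c) :
    ∃ y : Fin m → ℝ, (∀ k, 0 ≤ y k) ∧ (∀ j, ∑ k, D k j * y k = x j) ∧
      ∑ k, y k * d k ≤ c := by
  classical
  let toE : ((Fin n ⊕ Unit) → ℝ) ≃ₗ[ℝ] EuclideanSpace ℝ (Fin n ⊕ Unit) :=
    (WithLp.linearEquiv 2 ℝ _).symm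
  let w : Fin m ⊕ Unit → (Fin n ⊕ Unit) → ℝ :=
    Sum.elim (fun k => Sum.elim (fun j => D k j) (fun _ => d k))
      (fun _ => Sum.elim (fun _ => (0:ℝ)) (fun _ => 1))
  let uf : (Fin n ⊕ Unit) → ℝ := Sum.elim x (fun _ => c)
  have hinner : ∀ (f g : (Fin n ⊕ Unit) → ℝ),
      (inner ℝ (toE f) (toE g) : ℝ) = (∑ j, f (Sum.inl j) * g (Sum.inl j))
        + f (Sum.inr ()) * g (Sum.inr ()) := by
    intro f g
    rw [PiLp.inner_apply]
    simp only [toE, WithLp.linearEquiv_symm_apply,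
      RCLike.inner_apply, conj_trivial, Fintype.sum_sum_type]
    simp
    simp only [mul_comm]
  have key : ∀ z : EuclideanSpace ℝ (Fin n ⊕ Unit),
      (∀ k, 0 ≤ (inner ℝ (toE (w k)) z : ℝ)) → 0 ≤ (inner ℝ (toE uf) z : ℝ) := by
    intro z hz
    set ζ : (Fin n ⊕ Unit) → ℝ := toE.symm z with hζ
    have hzz : z = toE ζ := (toE.apply_symm_apply z).symm
    set α : Fin n → ℝ := fun j => -ζ (Sum.inl j) with hα
    set t : ℝ := -ζ (Sum.inr ()) with htd
    have ht : t ≤ 0 := by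
      have h0 := hz (Sum.inr ())
      rw [hzz, hinner] at h0
      simp only [w, Sum.elim_inr, Sum.elim_inl] at h0
      simp only [zero_mul, Finset.sum_const_zero, one_mul, zero_add] at h0
      simp only [htd]; linarith
    have hDα : ∀ k, ∑ j, D k j * α j ≤ -(d k * t) := by
      intro k
      have h0 := hz (Sum.inl k)
      rw [hzz, hinner] at h0
      simp only [w, Sum.elim_inl, Sum.elim_inr] at h0
      have h2 : ∑ j, D k j * α j = -∑ j, D k j * ζ (Sum.inl j) := by
        simp only [hα, mul_neg, ← Finset.sum_neg_distrib]
      rw [h2, htd]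
      ring_nf
      ring_nf at h0
      linarith
    have hval : ∑ j, α j * x j ≤ -(c * t) := by
      rcases ht.lt_or_eq with htlt | hteq
      · -- t < 0
        set β : Fin n → ℝ := fun j => α j / (-t) with hβ
        have hnt : (0:ℝ) < -t := by linarith
        have hfeasβ : ∀ k, ∑ j, D k j * β j ≤ d k := by
          intro k
          have h2 : ∑ j, D k j * β j = (∑ j, D k j * α j) / (-t) := by
            rw [Finset.sum_div]
            apply Finset.sum_congr rfl
            intro j _
            simp [hβ, mul_div_assoc]
          rw [h2, div_le_iff₀ hnt]
          calc ∑ j, D k j * α j ≤ -(d k * t) := hDα k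
            _ = d k * (-t) := by ring
        have := hub β hfeasβ
        have h2 : ∑ j, β j * x j = (∑ j, α j * x j) / (-t) := by
          rw [Finset.sum_div]
          apply Finset.sum_congr rfl
          intro j _
          simp [hβ, div_mul_eq_mul_div]
        rw [h2, div_le_iff₀ hnt] at this
        calc ∑ j, α j * x j ≤ c * (-t) := this
          _ = -(c * t) := by ring
      · -- t = 0
        rw [hteq, mul_zero, neg_zero]
        by_contra hP
        push_neg at hP
        set P : ℝ := ∑ j, α j * x j with hPd
        obtain ⟨a, ha⟩ := hfeas
        set A : ℝ := ∑ j, a j * x j with hAd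
        set s : ℝ := max 0 ((c + 1 - A) / P) with hs
        have hs0 : 0 ≤ s := le_max_left _ _
        have hfeas2 : ∀ k, ∑ j, D k j * (a j + s * α j) ≤ d k := by
          intro k
          have hDk := hDα k
          rw [hteq, mul_zero, neg_zero] at hDk
          have h2 : ∑ j, D k j * (a j + s * α j)
              = (∑ j, D k j * a j) + s * ∑ j, D k j * α j := by
            rw [Finset.mul_sum, ← Finset.sum_add_distrib]
            apply Finset.sum_congr rfl
            intro j _; ring
          rw [h2]
          have : s * ∑ j, D k j * α j ≤ 0 := mul_nonpos_of_nonneg_of_nonpos hs0 hDk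
          linarith [ha k]
        have hub2 := hub _ hfeas2
        have h2 : ∑ j, (a j + s * α j) * x j = A + s * P := by
          rw [hAd, hPd, Finset.mul_sum, ← Finset.sum_add_distrib]
          apply Finset.sum_congr rfl
          intro j _; ring
        rw [h2] at hub2
        have h3 : (c + 1 - A) / P ≤ s := le_max_right _ _
        have h4 : c + 1 - A ≤ s * P := by
          rw [← div_mul_cancel₀ (c + 1 - A) hP.ne']
          exact mul_le_mul_of_nonneg_right h3 hP.le
        linarith
    -- conclude
    rw [hzz, hinner]
    simp only [uf, Sum.elim_inl, Sum.elim_inr]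
    have h5 : ∑ j, x j * ζ (Sum.inl j) = -∑ j, α j * x j := by
      rw [← Finset.sum_neg_distrib]
      apply Finset.sum_congr rfl
      intro j _
      simp [hα]; ring
    have h6 : ζ (Sum.inr ()) = -t := by rw [htd]; ring
    rw [h5, h6]
    linarith
  obtain ⟨Y, hY0, hYsum⟩ := farkas_cone (fun k => toE (w k)) (toE uf) key
  have hsum2 : ∑ k, Y k • w k = uf := by
    have h7 := congrArg toE.symm hYsum
    rw [map_sum] at h7
    simp only [map_smul, toE.symm_apply_apply] at h7
    exact h7
  refine ⟨fun k => Y (Sum.inl k), fun k => hY0 _, ?_, ?_⟩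
  · intro j
    have h8 := congrFun hsum2 (Sum.inl j)
    simp only [Finset.sum_apply, Pi.smul_apply, smul_eq_mul, Fintype.sum_sum_type,
      w, uf, Sum.elim_inl, Sum.elim_inr, mul_zero, Finset.sum_const_zero, add_zero,
      Finset.univ_unique, Finset.sum_singleton] at h8
    rw [← h8]
    apply Finset.sum_congr rfl
    intro k _
    ring
  · have h8 := congrFun hsum2 (Sum.inr ())
    simp only [Finset.sum_apply, Pi.smul_apply, smul_eq_mul, Fintype.sum_sum_type,
      w, uf, Sum.elim_inl, Sum.elim_inr, mul_one,
      Finset.univ_unique, Finset.sum_singleton] at h8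
    rw [← h8]
    linarith [hY0 (Sum.inr ())]

theorem stmt6 (N n : ℕ) (hN : 0 < N) (hn : 0 < n)
    (m : Fin N → ℕ) (hm : ∀ i, 0 < m i)
    (D : (i : Fin N) → Fin (m i) → Fin n → ℝ)
    (d : (i : Fin N) → Fin (m i) → ℝ)
    (hA : ∀ i, ∃ a : Fin n → ℝ, ∀ k, ∑ j, D i k j * a j ≤ d i k)
    (x : Fin N → Fin n → ℝ) (b : ℝ) :
    (∀ α : Fin N → Fin n → ℝ,
        (∀ i k, ∑ j, D i k j * α i j ≤ d i k) →
        ∑ i, ∑ j, α i j * x i j ≤ b) ↔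
    (∃ y : (i : Fin N) → Fin (m i) → ℝ,
        (∀ i k, 0 ≤ y i k) ∧
        (∀ i j, ∑ k, D i k j * y i k = x i j) ∧
        ∑ i, ∑ k, y i k * d i k ≤ b) := by
  classical
  constructor
  · intro hrob
    choose a ha using hA
    set V : Fin N → Set ℝ := fun i =>
      {r | ∃ α : Fin n → ℝ, (∀ k, ∑ j, D i k j * α j ≤ d i k) ∧ r = ∑ j, α j * x i j}
      with hV
    have hVne : ∀ i, (V i).Nonempty := fun i => ⟨_, a i, ha i, rfl⟩
    have hVbdd : ∀ i, BddAbove (V i) := by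
      intro i
      refine ⟨b - ∑ i' ∈ Finset.univ.erase i, ∑ j, a i' j * x i' j, ?_⟩
      rintro r ⟨α, hαfeas, rfl⟩
      set αf : Fin N → Fin n → ℝ := fun i' => if i' = i then α else a i' with hαf
      have h1 := hrob αf (by
        intro i' k
        by_cases h : i' = i
        · subst h; simpa [hαf] using hαfeas k
        · simpa [hαf, h] using ha i' k)
      rw [← Finset.sum_erase_add _ _ (Finset.mem_univ i)] at h1
      have heq : ∑ i' ∈ Finset.univ.erase i, ∑ j, αf i' j * x i' j
          = ∑ i' ∈ Finset.univ.erase i, ∑ j, a i' j * x i' j := by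
        apply Finset.sum_congr rfl
        intro i' hi'
        have : i' ≠ i := Finset.ne_of_mem_erase hi'
        simp [hαf, this]
      have heq2 : ∑ j, αf i j * x i j = ∑ j, α j * x i j := by simp [hαf]
      rw [heq, heq2] at h1
      linarith
    set s : Fin N → ℝ := fun i => sSup (V i) with hs
    have hub : ∀ i (α : Fin n → ℝ), (∀ k, ∑ j, D i k j * α j ≤ d i k) →
        ∑ j, α j * x i j ≤ s i :=
      fun i α hα => le_csSup (hVbdd i) ⟨α, hα, rfl⟩
    have hssum : ∑ i, s i ≤ b := by
      by_contra hgt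
      push_neg at hgt
      set δ : ℝ := (∑ i, s i - b) / N with hδ
      have hNR : (0:ℝ) < N := by exact_mod_cast hN
      have hδ0 : 0 < δ := div_pos (by linarith) hNR
      have hex : ∀ i, ∃ α : Fin n → ℝ, (∀ k, ∑ j, D i k j * α j ≤ d i k) ∧
          s i - δ < ∑ j, α j * x i j := by
        intro i
        obtain ⟨r, hrV, hr⟩ := exists_lt_of_lt_csSup (hVne i)
          (show s i - δ < s i by linarith)
        obtain ⟨α, hα, rfl⟩ := hrV
        exact ⟨α, hα, hr⟩
      choose α hαfeas hαval using hex
      have h1 := hrob α (fun i k => hαfeas i k)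
      have h2 : ∑ i, (s i - δ) < ∑ i, ∑ j, α i j * x i j :=
        Finset.sum_lt_sum_of_nonempty (Finset.univ_nonempty_iff.mpr
          ⟨⟨0, hN⟩⟩) (fun i _ => hαval i)
      rw [Finset.sum_sub_distrib, Finset.sum_const, Finset.card_univ,
        Fintype.card_fin, nsmul_eq_mul] at h2
      have h3 : (N : ℝ) * δ = ∑ i, s i - b := by
        rw [hδ]; field_simp
      linarith
    have hFk := fun i =>
      farkas_affine (D i) (d i) ⟨a i, ha i⟩ (x i) (s i) (fun α hα => hub i α hα)
    choose y hy0 hyeq hyd using hFk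
    exact ⟨y, hy0, hyeq,
      le_trans (Finset.sum_le_sum fun i _ => hyd i) hssum⟩
  · rintro ⟨y, hy0, hyeq, hyd⟩ α hα
    have hblock : ∀ i, ∑ j, α i j * x i j ≤ ∑ k, y i k * d i k := by
      intro i
      have h1 : ∑ j, α i j * x i j = ∑ k, y i k * ∑ j, D i k j * α i j := by
        calc ∑ j, α i j * x i j = ∑ j, α i j * ∑ k, D i k j * y i k := by
              apply Finset.sum_congr rfl
              intro j _
              rw [hyeq i j]
          _ = ∑ j, ∑ k, α i j * (D i k j * y i k) := by
              apply Finset.sum_congr rfl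
              intro j _
              rw [Finset.mul_sum]
          _ = ∑ k, ∑ j, α i j * (D i k j * y i k) := Finset.sum_comm
          _ = ∑ k, y i k * ∑ j, D i k j * α i j := by
              apply Finset.sum_congr rfl
              intro k _
              rw [Finset.mul_sum]
              apply Finset.sum_congr rfl
              intro j _
              ring
      rw [h1]
      apply Finset.sum_le_sum
      intro k _
      exact mul_le_mul_of_nonneg_left (hα i k) (hy0 i k)
    calc ∑ i, ∑ j, α i j * x i j ≤ ∑ i, ∑ k, y i k * d i k :=
          Finset.sum_le_sum fun i _ => hblock i
      _ ≤ b := hyd
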